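/- The weak coefficient of ergodicity is submultiplicative: ρ(T̅∘S̅) ≤ ρ(T̅)·ρ(S̅) for arbitrary upper transition operators T̅ and S̅ on a finite state space. -/

import Mathlib

open Finset Set

noncomputable section

/-- Functions with values in [0,1]. -/
def L1 (X : Type*) : Set (X → ℝ) := {f | ∀ x, 0 ≤ f x ∧ f x ≤ 1}

/-- Probability mass function on a finite set. -/
def IsPMF {X : Type*} [Fintype X] (p : X → ℝ) : Prop :=
  (∀ x, 0 ≤ p x) ∧ ∑ x, p x = 1

/-- A credal set: nonempty compact convex set of pmfs. -/
def IsCredal {X : Type*} [Fintype X] (M : Set (X → ℝ)) : Prop :=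
  M.Nonempty ∧ IsCompact M ∧ Convex ℝ M ∧ ∀ p ∈ M, IsPMF p

/-- Linear expectation with respect to a pmf. -/
def linExp {X : Type*} [Fintype X] (p f : X → ℝ) : ℝ := ∑ x, p x * f x

/-- Upper expectation functional of a credal set. -/
def upperExp {X : Type*} [Fintype X] (M : Set (X → ℝ)) (f : X → ℝ) : ℝ :=
  sSup ((fun p => linExp p f) '' M)

/-- Lower expectation functional of a credal set. -/
def lowerExp {X : Type*} [Fintype X] (M : Set (X → ℝ)) (f : X → ℝ) : ℝ :=
  sInf ((fun p => linExp p f) '' M)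

/-- Chebyshev (sup) distance between functions. -/
def dCheb {X : Type*} (f g : X → ℝ) : ℝ := ⨆ x, |f x - g x|

/-- Distance between two (upper) expectation functionals. -/
def dFun {X : Type*} (F G : (X → ℝ) → ℝ) : ℝ :=
  sSup ((fun f => |F f - G f|) '' L1 X)

/-- Distance between an upper and a lower expectation functional. -/
def dUL {X : Type*} (F G : (X → ℝ) → ℝ) : ℝ :=
  sSup ((fun f => F f - G f) '' L1 X)

/-- Upper transition operator: rows are upper expectation functionals. -/
def IsUpperTrans {X : Type*} [Fintype X] (T : (X → ℝ) → (X → ℝ)) : Prop :=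
  ∃ M : X → Set (X → ℝ), (∀ x, IsCredal (M x)) ∧ ∀ f x, T f x = upperExp (M x) f

/-- Matching pair of upper and lower transition operators from the same credal sets. -/
def IsTransPair {X : Type*} [Fintype X] (T Tl : (X → ℝ) → (X → ℝ)) : Prop :=
  ∃ M : X → Set (X → ℝ), (∀ x, IsCredal (M x)) ∧
    (∀ f x, T f x = upperExp (M x) f) ∧ (∀ f x, Tl f x = lowerExp (M x) f)

/-- Distance between two (upper) transition operators. -/
def dOp {X : Type*} (T T' : (X → ℝ) → (X → ℝ)) : ℝ :=
  sSup ((fun f => dCheb (T f) (T' f)) '' L1 X)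

/-- Imprecision distance between an upper and a lower transition operator. -/
def dOpUL {X : Type*} (T Tl : (X → ℝ) → (X → ℝ)) : ℝ :=
  sSup ((fun f => ⨆ x, (T f x - Tl f x)) '' L1 X)

/-- Weak coefficient of ergodicity. -/
def rho {X : Type*} (T : (X → ℝ) → (X → ℝ)) : ℝ :=
  sSup {r | ∃ f ∈ L1 X, ∃ x y : X, r = |T f x - T f y|}

lemma linExp_bounds {X : Type*} [Fintype X] {p : X → ℝ} (hp : IsPMF p)
    {f : X → ℝ} {lo hi : ℝ} (h : ∀ x, lo ≤ f x ∧ f x ≤ hi) :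
    lo ≤ linExp p f ∧ linExp p f ≤ hi := by
  constructor
  · calc lo = ∑ x, p x * lo := by rw [← Finset.sum_mul, hp.2, one_mul]
      _ ≤ ∑ x, p x * f x :=
        Finset.sum_le_sum fun x _ => mul_le_mul_of_nonneg_left (h x).1 (hp.1 x)
  · calc linExp p f ≤ ∑ x, p x * hi :=
        Finset.sum_le_sum fun x _ => mul_le_mul_of_nonneg_left (h x).2 (hp.1 x)
      _ = hi := by rw [← Finset.sum_mul, hp.2, one_mul]

lemma linExp_affine {X : Type*} [Fintype X] {p : X → ℝ} (hp : IsPMF p)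
    (a b : ℝ) (h : X → ℝ) :
    linExp p (fun y => a * h y + b) = a * linExp p h + b := by
  unfold linExp
  have hx : ∀ x : X, p x * (a * h x + b) = a * (p x * h x) + b * p x := fun x => by ring
  simp_rw [hx, Finset.sum_add_distrib, ← Finset.mul_sum, hp.2, mul_one]

lemma credal_exists_max {X : Type*} [Fintype X] {M : Set (X → ℝ)} (hM : IsCredal M)
    (f : X → ℝ) : ∃ p ∈ M, IsGreatest ((fun q => linExp q f) '' M) (linExp p f) := by
  obtain ⟨ne, cpt, _, _⟩ := hM
  have hc : Continuous fun q : X → ℝ => linExp q f :=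
    continuous_finset_sum _ fun x _ => (continuous_apply x).mul continuous_const
  obtain ⟨p, hpM, hmax⟩ := cpt.exists_isMaxOn ne hc.continuousOn
  exact ⟨p, hpM, ⟨⟨p, hpM, rfl⟩, by rintro r ⟨q, hq, rfl⟩; exact hmax hq⟩⟩

lemma upperExp_bounds {X : Type*} [Fintype X] {M : Set (X → ℝ)} (hM : IsCredal M)
    {f : X → ℝ} {lo hi : ℝ} (h : ∀ x, lo ≤ f x ∧ f x ≤ hi) :
    lo ≤ upperExp M f ∧ upperExp M f ≤ hi := by
  obtain ⟨p, hpM, hg⟩ := credal_exists_max hM f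
  rw [upperExp, hg.csSup_eq]
  exact linExp_bounds (hM.2.2.2 p hpM) h

lemma upperExp_affine {X : Type*} [Fintype X] {M : Set (X → ℝ)} (hM : IsCredal M)
    {a : ℝ} (ha : 0 ≤ a) (b : ℝ) (h : X → ℝ) :
    upperExp M (fun y => a * h y + b) = a * upperExp M h + b := by
  obtain ⟨p, hpM, hg⟩ := credal_exists_max hM h
  have h1 : upperExp M h = linExp p h := hg.csSup_eq
  have hg2 : IsGreatest ((fun q => linExp q (fun y => a * h y + b)) '' M)
      (a * linExp p h + b) := by
    constructor
    · exact ⟨p, hpM, linExp_affine (hM.2.2.2 p hpM) a b h⟩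
    · rintro r ⟨q, hq, rfl⟩
      show linExp q (fun y => a * h y + b) ≤ _
      rw [linExp_affine (hM.2.2.2 q hq) a b h]
      have : linExp q h ≤ linExp p h := hg.2 ⟨q, hq, rfl⟩
      nlinarith
  rw [upperExp, hg2.csSup_eq, h1]

lemma rho_bddAbove {X : Type*} [Fintype X] {T : (X → ℝ) → (X → ℝ)}
    (hT : IsUpperTrans T) :
    BddAbove {r | ∃ f ∈ L1 X, ∃ x y : X, r = |T f x - T f y|} := by
  obtain ⟨M, hM, hrep⟩ := hT
  refine ⟨1, ?_⟩
  rintro r ⟨f, hf, x, y, rfl⟩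
  have hx := upperExp_bounds (hM x) hf
  have hy := upperExp_bounds (hM y) hf
  rw [hrep, hrep]
  rw [abs_le]
  constructor <;> linarith

lemma rho_nonneg {X : Type*} [Fintype X] [Nonempty X] {T : (X → ℝ) → (X → ℝ)}
    (hT : IsUpperTrans T) : 0 ≤ rho T := by
  have hb := rho_bddAbove hT
  have : (0:ℝ) ∈ {r | ∃ f ∈ L1 X, ∃ x y : X, r = |T f x - T f y|} := by
    refine ⟨fun _ => 0, fun x => ⟨le_refl _, zero_le_one⟩,
      Classical.arbitrary X, Classical.arbitrary X, by simp⟩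
  exact le_csSup hb this

theorem stmt9 {X : Type*} [Fintype X] [Nonempty X]
    (T S : (X → ℝ) → (X → ℝ)) (hT : IsUpperTrans T) (hS : IsUpperTrans S) :
    rho (fun f => T (S f)) ≤ rho T * rho S := by
  have bddT := rho_bddAbove hT
  have bddS := rho_bddAbove hS
  have hTn := rho_nonneg hT
  have hSn := rho_nonneg hS
  obtain ⟨MT, hMT, hTrep⟩ := hT
  obtain ⟨MS, hMS, hSrep⟩ := hS
  apply Real.sSup_le _ (mul_nonneg hTn hSn)
  rintro r ⟨f, hf, x, y, rfl⟩
  show |T (S f) x - T (S f) y| ≤ rho T * rho S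
  -- g := S f lies in [0,1]
  have hg : S f ∈ L1 X := by
    intro z
    rw [hSrep]
    exact upperExp_bounds (hMS z) hf
  set g := S f with hgdef
  obtain ⟨x₀, -, hx₀⟩ := Finset.exists_min_image Finset.univ g Finset.univ_nonempty
  obtain ⟨x₁, -, hx₁⟩ := Finset.exists_max_image Finset.univ g Finset.univ_nonempty
  have hmin : ∀ z, g x₀ ≤ g z := fun z => hx₀ z (Finset.mem_univ z)
  have hmax : ∀ z, g z ≤ g x₁ := fun z => hx₁ z (Finset.mem_univ z)
  set m := g x₀ with hm
  set osc := g x₁ - m with hoscdef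
  have hosc0 : 0 ≤ osc := by have := hmin x₁; linarith
  have hoscle : osc ≤ rho S := by
    apply le_csSup bddS
    exact ⟨f, hf, x₁, x₀, by rw [abs_of_nonneg hosc0]⟩
  rcases eq_or_lt_of_le hosc0 with hosc | hosc
  · -- g is constant
    have hconst : ∀ z, g z = m := fun z => le_antisymm (by have := hmax z; linarith) (hmin z)
    have hgc : g = fun z => (0:ℝ) * (0:ℝ) + m := by
      funext z; rw [hconst z]; ring
    have hc : ∀ w : X, T g w = m := by
      intro w
      rw [hTrep, hgc, upperExp_affine (hMT w) le_rfl (m) (fun _ => (0:ℝ))]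
      ring
    rw [hc x, hc y, sub_self, abs_zero]
    exact mul_nonneg hTn hSn
  · set h : X → ℝ := fun z => (g z - m) / osc with hhdef
    have hhL1 : h ∈ L1 X := by
      intro z
      constructor
      · exact div_nonneg (by have := hmin z; linarith) hosc0
      · rw [div_le_one hosc]
        have := hmax z; linarith
    have hge : g = fun z => osc * h z + m := by
      funext z
      rw [hhdef]
      field_simp
      ring
    have hTg : ∀ w : X, T g w = osc * T h w + m := by
      intro w
      rw [hTrep, hge, upperExp_affine (hMT w) hosc0 (m) h, ← hTrep]
    rw [hTg x, hTg y]
    have : osc * T h x + m - (osc * T h y + m) = osc * (T h x - T h y) := by ring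
    rw [this, abs_mul, abs_of_nonneg hosc0]
    have hd : |T h x - T h y| ≤ rho T := le_csSup bddT ⟨h, hhL1, x, y, rfl⟩
    calc osc * |T h x - T h y| ≤ rho S * rho T :=
          mul_le_mul hoscle hd (abs_nonneg _) hSn
      _ = rho T * rho S := mul_comm _ _
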